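/- arXiv:2001.05581 — 3 statements merged into one kernel-verified Lean document; each statement's English description precedes it below -/
import Mathlib

section
/- Let g : ℝ → ℝ be given by g(t) = |α - t|^P - |β - t|^P for fixed α, β ∈ ℝ and real P ≥ 1. Then for any closed interval [u, v], the maximum of g over [u, v] is attained at u or at v, i.e., sup_{t ∈ [u,v]} g(t) = max(g(u), g(v)). -/
open Set

lemma convexOn_abs_rpow {P : ℝ} (hP : 1 ≤ P) :
    ConvexOn ℝ Set.univ fun x : ℝ => |x| ^ P := by
  have habs : ConvexOn ℝ Set.univ (fun x : ℝ => |x|) := by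
    exact (convexOn_univ_norm (E := ℝ))
  have himg : (fun x : ℝ => |x|) '' Set.univ = Set.Ici 0 := by
    ext y
    constructor
    · rintro ⟨x, -, rfl⟩; exact abs_nonneg x
    · intro hy; exact ⟨y, trivial, abs_of_nonneg hy⟩
  have hmono : MonotoneOn (fun y : ℝ => y ^ P) ((fun x : ℝ => |x|) '' Set.univ) := by
    rw [himg]
    intro x hx y _ hxy
    exact Real.rpow_le_rpow hx hxy (by linarith)
  have := ConvexOn.comp (g := fun y : ℝ => y ^ P) (himg ▸ convexOn_rpow hP) habs hmono
  exact this

lemma shift_mono {f : ℝ → ℝ} (hf : ConvexOn ℝ Set.univ f) {c : ℝ} (hc : 0 ≤ c) :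
    Monotone fun s => f (s + c) - f s := by
  intro a b hab
  rcases eq_or_lt_of_le hab with rfl | hab
  · exact le_refl _
  rcases eq_or_lt_of_le hc with rfl | hc
  · simp
  set d := b + c - a with hd
  have hd0 : 0 < d := by linarith
  set l := c / d with hl
  have hl0 : 0 ≤ l := div_nonneg hc.le hd0.le
  have hl1 : l ≤ 1 := by
    rw [hl, div_le_one hd0]; linarith
  have hld : l * d = c := div_mul_cancel₀ _ hd0.ne'
  have h1 := hf.2 (Set.mem_univ a) (Set.mem_univ (b + c)) (by linarith : (0:ℝ) ≤ 1 - l)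
    hl0 (by ring)
  have h2 := hf.2 (Set.mem_univ a) (Set.mem_univ (b + c)) hl0
    (by linarith : (0:ℝ) ≤ 1 - l) (by ring)
  have e1 : (1 - l) • a + l • (b + c) = a + c := by
    simp only [smul_eq_mul]; nlinarith [hld]
  have e2 : l • a + (1 - l) • (b + c) = b := by
    simp only [smul_eq_mul]; nlinarith [hld]
  rw [e1] at h1
  rw [e2] at h2
  simp only [smul_eq_mul] at h1 h2
  dsimp only
  linarith

theorem sSup_diff_abs_pow_Icc (α β P u v : ℝ) (hP : 1 ≤ P) (huv : u ≤ v) :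
    sSup ((fun t => |α - t| ^ P - |β - t| ^ P) '' Set.Icc u v) =
      max (|α - u| ^ P - |β - u| ^ P) (|α - v| ^ P - |β - v| ^ P) := by
  set g := fun t => |α - t| ^ P - |β - t| ^ P with hg
  have hconv := convexOn_abs_rpow hP
  rcases le_total β α with hba | hab
  · -- g is antitone
    have hanti : Antitone g := by
      intro s t hst
      have := shift_mono hconv (by linarith : (0:ℝ) ≤ α - β)
        (show β - t ≤ β - s by linarith)
      simpa [hg, show β - s + (α - β) = α - s by ring,
        show β - t + (α - β) = α - t by ring] using this
    have hgreat : IsGreatest (g '' Set.Icc u v) (g u) := by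
      constructor
      · exact ⟨u, ⟨le_refl u, huv⟩, rfl⟩
      · rintro y ⟨t, ht, rfl⟩; exact hanti ht.1
    rw [hgreat.csSup_eq]
    exact (max_eq_left (hanti huv)).symm
  · -- g is monotone
    have hmono : Monotone g := by
      intro s t hst
      have := shift_mono hconv (by linarith : (0:ℝ) ≤ β - α)
        (show α - t ≤ α - s by linarith)
      simp only [show α - s + (β - α) = β - s by ring,
        show α - t + (β - α) = β - t by ring] at this
      simp only [hg]
      linarith
    have hgreat : IsGreatest (g '' Set.Icc u v) (g v) := by
      constructor
      · exact ⟨v, ⟨huv, le_refl v⟩, rfl⟩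
      · rintro y ⟨t, ht, rfl⟩; exact hmono ht.2
    rw [hgreat.csSup_eq]
    exact (max_eq_right (hmono huv)).symm
end

section
/- Let A, B, R ⊆ ℝ^d be nonempty axis-parallel boxes and P ≥ 1. Then A dominates B w.r.t. R under the L_P distance (i.e., for all r ∈ R, a ∈ A, b ∈ B: ‖a - r‖_P < ‖b - r‖_P) if and only if Σ_{i=1}^d max_{r_i ∈ {Rmin_i, Rmax_i}} ( MaxDist(A_i, r_i)^P - MinDist(B_i, r_i)^P ) < 0, where A_i, B_i denote the i-th coordinate intervals, MaxDist(X, x) = max(|x - Xmin|, |x - Xmax|) and MinDist(X, x) is the distance from x to the interval X. -/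
noncomputable def MinDist1 (lo hi x : ℝ) : ℝ :=
  if x < lo then lo - x else if hi < x then x - hi else 0

noncomputable def MaxDist1 (lo hi x : ℝ) : ℝ := max |x - lo| |x - hi|

namespace DomCrit

lemma mind_nonneg (lo hi x : ℝ) : 0 ≤ MinDist1 lo hi x := by
  unfold MinDist1; split_ifs <;> linarith

lemma maxd_eq {a1 a2 x : ℝ} (h : a1 ≤ a2) :
    MaxDist1 a1 a2 x = max (x - a1) (a2 - x) := by
  unfold MaxDist1
  rw [max_def, max_def]
  rcases abs_cases (x - a1) with ⟨e1, s1⟩ | ⟨e1, s1⟩ <;>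
    rcases abs_cases (x - a2) with ⟨e2, s2⟩ | ⟨e2, s2⟩ <;>
    rw [e1, e2] <;> split_ifs <;> linarith

lemma maxd_right {a1 a2 x : ℝ} (h : a1 ≤ a2) (hx : (a1 + a2) / 2 ≤ x) :
    MaxDist1 a1 a2 x = x - a1 := by
  rw [maxd_eq h, max_eq_left (by linarith)]

lemma maxd_left {a1 a2 x : ℝ} (h : a1 ≤ a2) (hx : x ≤ (a1 + a2) / 2) :
    MaxDist1 a1 a2 x = a2 - x := by
  rw [maxd_eq h, max_eq_right (by linarith)]

lemma abs_le_maxd {lo hi a x : ℝ} (h1 : lo ≤ a) (h2 : a ≤ hi) :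
    |a - x| ≤ MaxDist1 lo hi x := by
  rw [maxd_eq (le_trans h1 h2)]
  rcases abs_cases (a - x) with ⟨e, s⟩ | ⟨e, s⟩ <;> rw [e]
  · exact le_trans (by linarith) (le_max_right _ _)
  · exact le_trans (by linarith) (le_max_left _ _)

lemma mind_le_abs {lo hi b x : ℝ} (h1 : lo ≤ b) (h2 : b ≤ hi) :
    MinDist1 lo hi x ≤ |b - x| := by
  have h3 := le_abs_self (b - x)
  have h4 := neg_abs_le (b - x)
  have h5 := abs_nonneg (b - x)
  unfold MinDist1; split_ifs <;> linarith

lemma maxd_attain (lo hi x : ℝ) (h : lo ≤ hi) :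
    ∃ a, lo ≤ a ∧ a ≤ hi ∧ |a - x| = MaxDist1 lo hi x := by
  unfold MaxDist1
  rcases le_total |x - hi| |x - lo| with hc | hc
  · exact ⟨lo, le_refl _, h, by rw [abs_sub_comm, max_eq_left hc]⟩
  · exact ⟨hi, h, le_refl _, by rw [abs_sub_comm, max_eq_right hc]⟩

lemma mind_attain (lo hi x : ℝ) (h : lo ≤ hi) :
    ∃ b, lo ≤ b ∧ b ≤ hi ∧ |b - x| = MinDist1 lo hi x := by
  unfold MinDist1
  split_ifs with h1 h2
  · exact ⟨lo, le_refl _, h, by rw [abs_of_pos (by linarith)]⟩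
  · exact ⟨hi, h, le_refl _, by rw [abs_of_neg (by linarith)]; ring⟩
  · exact ⟨x, by linarith, by linarith, by simp⟩

lemma mind_left {b1 b2 x : ℝ} (hb : b1 ≤ b2) (hx : x ≤ b1) :
    MinDist1 b1 b2 x = b1 - x := by
  unfold MinDist1; split_ifs <;> linarith

lemma mind_right {b1 b2 x : ℝ} (hb : b1 ≤ b2) (hx : b2 ≤ x) :
    MinDist1 b1 b2 x = x - b2 := by
  unfold MinDist1; split_ifs <;> linarith

lemma mind_lip {b1 b2 x y : ℝ} (hb : b1 ≤ b2) (hxy : x ≤ y) :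
    MinDist1 b1 b2 y ≤ MinDist1 b1 b2 x + (y - x) := by
  unfold MinDist1; split_ifs <;> linarith

lemma mind_lip' {b1 b2 x y : ℝ} (hb : b1 ≤ b2) (hyx : y ≤ x) :
    MinDist1 b1 b2 y ≤ MinDist1 b1 b2 x + (x - y) := by
  unfold MinDist1; split_ifs <;> linarith

lemma mind_anti_left {b1 b2 x y : ℝ} (hb : b1 ≤ b2) (hxy : x ≤ y) (hy : y ≤ b2) :
    MinDist1 b1 b2 y ≤ MinDist1 b1 b2 x := by
  unfold MinDist1; split_ifs <;> linarith

lemma mind_mono_right {b1 b2 x y : ℝ} (hb : b1 ≤ b2) (hy : b1 ≤ y) (hyx : y ≤ x) :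
    MinDist1 b1 b2 y ≤ MinDist1 b1 b2 x := by
  unfold MinDist1; split_ifs <;> linarith

/-- Convexity shift: for the convex increasing `t ↦ t^P` on `[0,∞)`. -/
lemma rpow_shift {P : ℝ} (hP : 1 ≤ P) {b a h : ℝ} (hb : 0 ≤ b) (hba : b ≤ a) (hh : 0 ≤ h) :
    (b + h) ^ P - b ^ P ≤ (a + h) ^ P - a ^ P := by
  rcases eq_or_lt_of_le (show b ≤ a + h by linarith) with heq | hlt
  · rw [show a = b by linarith, show h = (0:ℝ) by linarith]
  · have hden : 0 < a + h - b := by linarith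
    set l : ℝ := h / (a + h - b) with hl
    have hl0 : 0 ≤ l := div_nonneg hh hden.le
    have hl1 : l ≤ 1 := by
      rw [hl, div_le_one hden]; linarith
    have h2 : l * (a + h - b) = h := div_mul_cancel₀ _ hden.ne'
    have C := convexOn_rpow hP
    have key1 := C.2 (Set.mem_Ici.mpr hb) (Set.mem_Ici.mpr (by linarith : (0:ℝ) ≤ a + h))
      (by linarith : (0:ℝ) ≤ 1 - l) hl0 (by ring)
    have key2 := C.2 (Set.mem_Ici.mpr hb) (Set.mem_Ici.mpr (by linarith : (0:ℝ) ≤ a + h))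
      hl0 (by linarith : (0:ℝ) ≤ 1 - l) (by ring)
    simp only [smul_eq_mul] at key1 key2
    rw [show (1 - l) * b + l * (a + h) = b + h by linear_combination h2] at key1
    rw [show l * b + (1 - l) * (a + h) = a by linear_combination -h2] at key2
    linarith

lemma rpow_sub_le {P : ℝ} (hP : 1 ≤ P) {s s' t t' : ℝ} (hs : 0 ≤ s) (ht : 0 ≤ t)
    (hss : s ≤ s') (htt : t ≤ t') (hd : s' - s ≤ t' - t) (hst : s' ≤ t') :
    s' ^ P - s ^ P ≤ t' ^ P - t ^ P := by
  have key := rpow_shift hP hs (show s ≤ t' - (s' - s) by linarith) (show (0:ℝ) ≤ s' - s by linarith)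
  rw [show s + (s' - s) = s' by ring, show t' - (s' - s) + (s' - s) = t' by ring] at key
  have h2 : t ^ P ≤ (t' - (s' - s)) ^ P := Real.rpow_le_rpow ht (by linarith) (by linarith)
  linarith

noncomputable def g (a1 a2 b1 b2 P x : ℝ) : ℝ :=
  MaxDist1 a1 a2 x ^ P - MinDist1 b1 b2 x ^ P

lemma MR {a1 a2 b1 b2 P x y : ℝ} (hP : 1 ≤ P) (ha : a1 ≤ a2) (hb : b1 ≤ b2)
    (hab : a1 ≤ b2) (hm : (a1 + a2) / 2 ≤ x) (hxy : x ≤ y) :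
    g a1 a2 b1 b2 P x ≤ g a1 a2 b1 b2 P y := by
  have hx1 : MaxDist1 a1 a2 x = x - a1 := maxd_right ha hm
  have hy1 : MaxDist1 a1 a2 y = y - a1 := maxd_right ha (by linarith)
  have hxa : (0:ℝ) ≤ x - a1 := by linarith
  unfold g
  rw [hx1, hy1]
  rcases le_or_gt (MinDist1 b1 b2 y) (MinDist1 b1 b2 x) with hc | hc
  · have h1 : (x - a1) ^ P ≤ (y - a1) ^ P := Real.rpow_le_rpow hxa (by linarith) (by linarith)
    have h2 : MinDist1 b1 b2 y ^ P ≤ MinDist1 b1 b2 x ^ P :=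
      Real.rpow_le_rpow (mind_nonneg _ _ _) hc (by linarith)
    linarith
  · have hyb : b2 < y := by
      by_contra hyb
      exact absurd (mind_anti_left hb hxy (not_lt.mp hyb)) (not_le.mpr hc)
    have hmy : MinDist1 b1 b2 y = y - b2 := mind_right hb hyb.le
    have hlip : MinDist1 b1 b2 y ≤ MinDist1 b1 b2 x + (y - x) := mind_lip hb hxy
    have key := rpow_sub_le hP (mind_nonneg b1 b2 x) hxa hc.le
      (by linarith : x - a1 ≤ y - a1) (by linarith) (by rw [hmy]; linarith)
    linarith

lemma ML {a1 a2 b1 b2 P x y : ℝ} (hP : 1 ≤ P) (ha : a1 ≤ a2) (hb : b1 ≤ b2)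
    (hab : b1 ≤ a2) (hm : x ≤ (a1 + a2) / 2) (hyx : y ≤ x) :
    g a1 a2 b1 b2 P x ≤ g a1 a2 b1 b2 P y := by
  have hx1 : MaxDist1 a1 a2 x = a2 - x := maxd_left ha hm
  have hy1 : MaxDist1 a1 a2 y = a2 - y := maxd_left ha (by linarith)
  have hxa : (0:ℝ) ≤ a2 - x := by linarith
  unfold g
  rw [hx1, hy1]
  rcases le_or_gt (MinDist1 b1 b2 y) (MinDist1 b1 b2 x) with hc | hc
  · have h1 : (a2 - x) ^ P ≤ (a2 - y) ^ P := Real.rpow_le_rpow hxa (by linarith) (by linarith)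
    have h2 : MinDist1 b1 b2 y ^ P ≤ MinDist1 b1 b2 x ^ P :=
      Real.rpow_le_rpow (mind_nonneg _ _ _) hc (by linarith)
    linarith
  · have hyb : y < b1 := by
      by_contra hyb
      exact absurd (mind_mono_right hb (not_lt.mp hyb) hyx) (not_le.mpr hc)
    have hmy : MinDist1 b1 b2 y = b1 - y := mind_left hb hyb.le
    have hlip : MinDist1 b1 b2 y ≤ MinDist1 b1 b2 x + (x - y) := mind_lip' hb hyx
    have key := rpow_sub_le hP (mind_nonneg b1 b2 x) hxa hc.le
      (by linarith : a2 - x ≤ a2 - y) (by linarith) (by rw [hmy]; linarith)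
    linarith

lemma AR' {a1 a2 b1 b2 P x y : ℝ} (hP : 1 ≤ P) (ha : a1 ≤ a2) (hb : b1 ≤ b2)
    (hab : a2 ≤ b1) (hxy : x ≤ y) (hym : y ≤ (a1 + a2) / 2) :
    g a1 a2 b1 b2 P x ≤ g a1 a2 b1 b2 P y := by
  have hMx : MaxDist1 a1 a2 x = a2 - x := maxd_left ha (by linarith)
  have hMy : MaxDist1 a1 a2 y = a2 - y := maxd_left ha hym
  have hmx : MinDist1 b1 b2 x = b1 - x := mind_left hb (by linarith)
  have hmy : MinDist1 b1 b2 y = b1 - y := mind_left hb (by linarith)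
  have key := rpow_sub_le hP (show (0:ℝ) ≤ a2 - y by linarith) (show (0:ℝ) ≤ b1 - y by linarith)
    (show a2 - y ≤ a2 - x by linarith) (show b1 - y ≤ b1 - x by linarith)
    (by linarith) (by linarith)
  unfold g
  rw [hMx, hMy, hmx, hmy]
  linarith

lemma AL' {a1 a2 b1 b2 P x y : ℝ} (hP : 1 ≤ P) (ha : a1 ≤ a2) (hb : b1 ≤ b2)
    (hab : b2 ≤ a1) (hmx : (a1 + a2) / 2 ≤ x) (hxy : x ≤ y) :
    g a1 a2 b1 b2 P y ≤ g a1 a2 b1 b2 P x := by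
  have hMx : MaxDist1 a1 a2 x = x - a1 := maxd_right ha hmx
  have hMy : MaxDist1 a1 a2 y = y - a1 := maxd_right ha (by linarith)
  have hmx' : MinDist1 b1 b2 x = x - b2 := mind_right hb (by linarith)
  have hmy' : MinDist1 b1 b2 y = y - b2 := mind_right hb (by linarith)
  have key := rpow_sub_le hP (show (0:ℝ) ≤ x - a1 by linarith) (show (0:ℝ) ≤ x - b2 by linarith)
    (show x - a1 ≤ y - a1 by linarith) (show x - b2 ≤ y - b2 by linarith)
    (by linarith) (by linarith)
  unfold g
  rw [hMx, hMy, hmx', hmy']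
  linarith

lemma AR {a1 a2 b1 b2 P x y : ℝ} (hP : 1 ≤ P) (ha : a1 ≤ a2) (hb : b1 ≤ b2)
    (hab : a2 ≤ b1) (hxy : x ≤ y) :
    g a1 a2 b1 b2 P x ≤ g a1 a2 b1 b2 P y := by
  rcases le_total y ((a1 + a2) / 2) with hym | hym
  · exact AR' hP ha hb hab hxy hym
  · rcases le_total x ((a1 + a2) / 2) with hxm | hxm
    · exact le_trans (AR' hP ha hb hab hxm (le_refl _))
        (MR hP ha hb (by linarith) (le_refl _) hym)
    · exact MR hP ha hb (by linarith) hxm hxy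

lemma AL {a1 a2 b1 b2 P x y : ℝ} (hP : 1 ≤ P) (ha : a1 ≤ a2) (hb : b1 ≤ b2)
    (hab : b2 ≤ a1) (hxy : x ≤ y) :
    g a1 a2 b1 b2 P y ≤ g a1 a2 b1 b2 P x := by
  rcases le_total ((a1 + a2) / 2) x with hxm | hxm
  · exact AL' hP ha hb hab hxm hxy
  · rcases le_total y ((a1 + a2) / 2) with hym | hym
    · exact ML hP ha hb (by linarith) hym hxy
    · exact le_trans (AL' hP ha hb hab (le_refl _) hym)
        (ML hP ha hb (by linarith) (le_refl _) hxm)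

lemma QC {a1 a2 b1 b2 P u x v : ℝ} (hP : 1 ≤ P) (ha : a1 ≤ a2) (hb : b1 ≤ b2)
    (hux : u ≤ x) (hxv : x ≤ v) :
    g a1 a2 b1 b2 P x ≤ max (g a1 a2 b1 b2 P u) (g a1 a2 b1 b2 P v) := by
  rcases le_total a2 b1 with h | h
  · exact le_trans (AR hP ha hb h hxv) (le_max_right _ _)
  · rcases le_total b2 a1 with h2 | h2
    · exact le_trans (AL hP ha hb h2 hux) (le_max_left _ _)
    · rcases le_total x ((a1 + a2) / 2) with h3 | h3
      · exact le_trans (ML hP ha hb h h3 hux) (le_max_left _ _)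
      · exact le_trans (MR hP ha hb h2 h3 hxv) (le_max_right _ _)

end DomCrit

open DomCrit in
theorem domination_criterion (d : ℕ) (Amin Amax Bmin Bmax Rmin Rmax : Fin d → ℝ)
    (hA : ∀ i, Amin i ≤ Amax i) (hB : ∀ i, Bmin i ≤ Bmax i)
    (hR : ∀ i, Rmin i ≤ Rmax i) (P : ℝ) (hP : 1 ≤ P) :
    (∀ r ∈ Set.univ.pi (fun i => Set.Icc (Rmin i) (Rmax i)),
      ∀ a ∈ Set.univ.pi (fun i => Set.Icc (Amin i) (Amax i)),
      ∀ b ∈ Set.univ.pi (fun i => Set.Icc (Bmin i) (Bmax i)),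
        (∑ i, |a i - r i| ^ P) ^ (1 / P) < (∑ i, |b i - r i| ^ P) ^ (1 / P)) ↔
    (∑ i, max (MaxDist1 (Amin i) (Amax i) (Rmin i) ^ P - MinDist1 (Bmin i) (Bmax i) (Rmin i) ^ P)
        (MaxDist1 (Amin i) (Amax i) (Rmax i) ^ P - MinDist1 (Bmin i) (Bmax i) (Rmax i) ^ P)) < 0 := by
  have hP0 : (0:ℝ) < P := by linarith
  have hP0' : (0:ℝ) < 1 / P := by positivity
  have hrw : ∀ i x, MaxDist1 (Amin i) (Amax i) x ^ P - MinDist1 (Bmin i) (Bmax i) x ^ P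
      = g (Amin i) (Amax i) (Bmin i) (Bmax i) P x := fun i x => rfl
  constructor
  · intro H
    set rs : Fin d → ℝ := fun i =>
      if g (Amin i) (Amax i) (Bmin i) (Bmax i) P (Rmax i)
          ≤ g (Amin i) (Amax i) (Bmin i) (Bmax i) P (Rmin i)
      then Rmin i else Rmax i with hrs
    have hrsmem : ∀ i, Rmin i ≤ rs i ∧ rs i ≤ Rmax i := by
      intro i; rw [hrs]; dsimp only; split_ifs
      exacts [⟨le_refl _, hR i⟩, ⟨hR i, le_refl _⟩]
    have hgmax : ∀ i, max (g (Amin i) (Amax i) (Bmin i) (Bmax i) P (Rmin i))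
        (g (Amin i) (Amax i) (Bmin i) (Bmax i) P (Rmax i))
        = g (Amin i) (Amax i) (Bmin i) (Bmax i) P (rs i) := by
      intro i; rw [hrs]; dsimp only; split_ifs with h
      · exact max_eq_left h
      · exact max_eq_right (le_of_not_ge h)
    have h1 : ∀ i, ∃ a, Amin i ≤ a ∧ a ≤ Amax i ∧
        |a - rs i| = MaxDist1 (Amin i) (Amax i) (rs i) :=
      fun i => maxd_attain _ _ _ (hA i)
    choose as ha1 ha2 ha3 using h1
    have h2 : ∀ i, ∃ b, Bmin i ≤ b ∧ b ≤ Bmax i ∧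
        |b - rs i| = MinDist1 (Bmin i) (Bmax i) (rs i) :=
      fun i => mind_attain _ _ _ (hB i)
    choose bs hb1 hb2 hb3 using h2
    have hmemr : rs ∈ Set.univ.pi (fun i => Set.Icc (Rmin i) (Rmax i)) :=
      fun i _ => ⟨(hrsmem i).1, (hrsmem i).2⟩
    have hmema : as ∈ Set.univ.pi (fun i => Set.Icc (Amin i) (Amax i)) :=
      fun i _ => ⟨ha1 i, ha2 i⟩
    have hmemb : bs ∈ Set.univ.pi (fun i => Set.Icc (Bmin i) (Bmax i)) :=
      fun i _ => ⟨hb1 i, hb2 i⟩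
    have hlt := H rs hmemr as hmema bs hmemb
    have hUV : ∑ i, |as i - rs i| ^ P < ∑ i, |bs i - rs i| ^ P := by
      by_contra hc
      push_neg at hc
      have hnn : (0:ℝ) ≤ ∑ i, |bs i - rs i| ^ P :=
        Finset.sum_nonneg fun i _ => Real.rpow_nonneg (abs_nonneg _) _
      have := Real.rpow_le_rpow hnn hc hP0'.le
      linarith
    calc (∑ i, max (MaxDist1 (Amin i) (Amax i) (Rmin i) ^ P
            - MinDist1 (Bmin i) (Bmax i) (Rmin i) ^ P)
          (MaxDist1 (Amin i) (Amax i) (Rmax i) ^ P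
            - MinDist1 (Bmin i) (Bmax i) (Rmax i) ^ P))
        = ∑ i, (|as i - rs i| ^ P - |bs i - rs i| ^ P) := by
          refine Finset.sum_congr rfl fun i _ => ?_
          rw [hrw, hrw, hgmax i]
          unfold DomCrit.g
          rw [ha3 i, hb3 i]
      _ = (∑ i, |as i - rs i| ^ P) - ∑ i, |bs i - rs i| ^ P := Finset.sum_sub_distrib _ _
      _ < 0 := by linarith
  · intro H r hr a ha b hb
    have hkey : ∀ i, |a i - r i| ^ P - |b i - r i| ^ P
        ≤ max (MaxDist1 (Amin i) (Amax i) (Rmin i) ^ P - MinDist1 (Bmin i) (Bmax i) (Rmin i) ^ P)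
          (MaxDist1 (Amin i) (Amax i) (Rmax i) ^ P
            - MinDist1 (Bmin i) (Bmax i) (Rmax i) ^ P) := by
      intro i
      have hri := hr i (Set.mem_univ i)
      have hai := ha i (Set.mem_univ i)
      have hbi := hb i (Set.mem_univ i)
      have e1 : |a i - r i| ≤ MaxDist1 (Amin i) (Amax i) (r i) := abs_le_maxd hai.1 hai.2
      have e2 : MinDist1 (Bmin i) (Bmax i) (r i) ≤ |b i - r i| := mind_le_abs hbi.1 hbi.2
      have e1' : |a i - r i| ^ P ≤ MaxDist1 (Amin i) (Amax i) (r i) ^ P :=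
        Real.rpow_le_rpow (abs_nonneg _) e1 hP0.le
      have e2' : MinDist1 (Bmin i) (Bmax i) (r i) ^ P ≤ |b i - r i| ^ P :=
        Real.rpow_le_rpow (mind_nonneg _ _ _) e2 hP0.le
      have e3 := QC (a1 := Amin i) (a2 := Amax i) (b1 := Bmin i) (b2 := Bmax i)
        (u := Rmin i) (x := r i) (v := Rmax i) hP (hA i) (hB i) hri.1 hri.2
      unfold DomCrit.g at e3
      linarith
    have hsum : ∑ i, |a i - r i| ^ P < ∑ i, |b i - r i| ^ P := by
      have h1 := Finset.sum_le_sum (fun i (_ : i ∈ Finset.univ) => hkey i)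
      rw [Finset.sum_sub_distrib] at h1
      linarith
    exact Real.rpow_lt_rpow
      (Finset.sum_nonneg fun i _ => Real.rpow_nonneg (abs_nonneg _) _) hsum hP0'
end

section
/- (Corner-based criterion for convex regions) Let a, b ∈ ℝ^d be points and R ⊆ ℝ^d a compact axis-parallel box with corner set C(R) = Π_i {Rmin_i, Rmax_i}. Then a dominates b w.r.t. R under Euclidean distance (∀ r ∈ R: ‖a - r‖ < ‖b - r‖) if and only if for every corner c ∈ C(R): ‖a - c‖ < ‖b - c‖. -/
theorem corner_criterion (d : ℕ) (a b : EuclideanSpace ℝ (Fin d)) (Rmin Rmax : Fin d → ℝ)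
    (hR : ∀ i, Rmin i ≤ Rmax i) :
    (∀ r : EuclideanSpace ℝ (Fin d), (∀ i, r i ∈ Set.Icc (Rmin i) (Rmax i)) →
        ‖a - r‖ < ‖b - r‖) ↔
      (∀ c : EuclideanSpace ℝ (Fin d), (∀ i, c i = Rmin i ∨ c i = Rmax i) →
        ‖a - c‖ < ‖b - c‖) := by
  have ns : ∀ x y : EuclideanSpace ℝ (Fin d), ‖x - y‖ ^ 2 = ∑ i, (x i - y i) ^ 2 := by
    intro x y
    rw [EuclideanSpace.norm_eq, Real.sq_sqrt (by positivity)]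
    exact Finset.sum_congr rfl fun i _ => by simp [sq_abs]
  constructor
  · intro h c hc
    refine h c fun i => ?_
    rcases hc i with e | e
    · rw [e]; exact ⟨le_refl _, hR i⟩
    · rw [e]; exact ⟨hR i, le_refl _⟩
  · intro h r hr
    set c : EuclideanSpace ℝ (Fin d) := WithLp.toLp 2 (fun i => if 0 ≤ b i - a i then Rmax i else Rmin i)
      with hcdef
    have hc : ‖a - c‖ < ‖b - c‖ := h c fun i => by
      by_cases h0 : 0 ≤ b i - a i
      · exact Or.inr (if_pos h0)
      · exact Or.inl (if_neg h0)
    have key : ‖a - c‖ ^ 2 < ‖b - c‖ ^ 2 :=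
      pow_lt_pow_left₀ hc (norm_nonneg _) two_ne_zero
    rw [ns, ns] at key
    have term : ∀ i ∈ Finset.univ, (b i - c i) ^ 2 - (a i - c i) ^ 2 ≤
        (b i - r i) ^ 2 - (a i - r i) ^ 2 := by
      intro i _
      by_cases h0 : 0 ≤ b i - a i
      · have hci : c i = Rmax i := if_pos h0
        have h2 := (hr i).2
        nlinarith
      · have hci : c i = Rmin i := if_neg h0
        have h1 := (hr i).1
        push_neg at h0
        nlinarith
    have hsum := Finset.sum_le_sum term
    rw [Finset.sum_sub_distrib, Finset.sum_sub_distrib] at hsum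
    have : ‖a - r‖ ^ 2 < ‖b - r‖ ^ 2 := by rw [ns, ns]; linarith
    exact lt_of_pow_lt_pow_left₀ 2 (norm_nonneg _) this
end
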